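/- Let β ∈ V* and let Γ ∈ V^k be any SOPDE-tuple at velocities v. Then Ω(Γ)(Z) = β(Z) for every Z ∈ 𝔐 if and only if there exists a SOPDE-tuple Γ' at velocities v with Ω(Γ') = β. (Pointwise content of the Proposition giving the alternative characterization S_1 = {x : i(Z)(Ω_𝓛(𝚪) − dE_𝓛)(x) = 0 for all Z ∈ 𝔐}.) -/
import Mathlib


/-- Pointwise content of the Proposition giving the alternative characterization
`S_1 = {x : i(Z)(Ω_𝓛(𝚪) − dE_𝓛)(x) = 0 for all Z ∈ 𝔐}`:
for `β ∈ V*` and any SOPDE-tuple `Γ` at velocities `v`, `Ω(Γ)` agrees with `β`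
on `𝔐` iff there exists a SOPDE-tuple `Γ'` at `v` with `Ω(Γ') = β`. -/
theorem stmt6 {k n : ℕ} (hk : 1 ≤ k) (hn : 1 ≤ n)
    (ω : Fin k → ((Fin n → ℝ) × (Fin k → Fin n → ℝ)) →ₗ[ℝ]
        ((Fin n → ℝ) × (Fin k → Fin n → ℝ)) →ₗ[ℝ] ℝ)
    (halt : ∀ α z, ω α z z = 0)
    (v : Fin k → Fin n → ℝ)
    (β : ((Fin n → ℝ) × (Fin k → Fin n → ℝ)) →ₗ[ℝ] ℝ)
    (Γ : Fin k → (Fin n → ℝ) × (Fin k → Fin n → ℝ))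
    (hΓsopde : ∀ α, (Γ α).1 = v α) :
    (∀ Z : (Fin n → ℝ) × (Fin k → Fin n → ℝ),
      (∀ U : Fin k → (Fin n → ℝ) × (Fin k → Fin n → ℝ),
        (∀ α, (U α).1 = 0) → (∑ α, ω α (U α) Z) = 0) →
      (∑ α, ω α (Γ α) Z) = β Z) ↔
    (∃ Γ' : Fin k → (Fin n → ℝ) × (Fin k → Fin n → ℝ),
      (∀ α, (Γ' α).1 = v α) ∧ ∀ Z, (∑ α, ω α (Γ' α) Z) = β Z) := by
  constructor
  · intro h
    -- the linear map sending a vertical tuple to its Ω-functional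
    let L : (Fin k → (Fin k → Fin n → ℝ)) →ₗ[ℝ]
        (((Fin n → ℝ) × (Fin k → Fin n → ℝ)) →ₗ[ℝ] ℝ) :=
      { toFun := fun w => ∑ α, ω α (0, w α)
        map_add' := by
          intro x y
          have h0 : ∀ α, ((0 : Fin n → ℝ), x α + y α) = (0, x α) + (0, y α) := by
            intro α; rw [Prod.mk_add_mk, zero_add]
          simp only [Pi.add_apply, h0, map_add]
          exact Finset.sum_add_distrib
        map_smul' := by
          intro c x
          have h0 : ∀ α, ((0 : Fin n → ℝ), c • x α) = c • ((0 : Fin n → ℝ), x α) := by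
            intro α; rw [Prod.smul_mk, smul_zero]
          simp only [Pi.smul_apply, h0, map_smul, RingHom.id_apply]
          exact (Finset.smul_sum).symm }
    set S : Submodule ℝ (((Fin n → ℝ) × (Fin k → Fin n → ℝ)) →ₗ[ℝ] ℝ) :=
      LinearMap.range L with hS
    set φ : ((Fin n → ℝ) × (Fin k → Fin n → ℝ)) →ₗ[ℝ] ℝ :=
      β - ∑ α, ω α (Γ α) with hφ
    have hmem : φ ∈ S.dualCoannihilator.dualAnnihilator := by
      rw [Submodule.mem_dualAnnihilator]
      intro Z hZ
      rw [Submodule.mem_dualCoannihilator] at hZ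
      have hZ' : ∀ U : Fin k → (Fin n → ℝ) × (Fin k → Fin n → ℝ),
          (∀ α, (U α).1 = 0) → (∑ α, ω α (U α) Z) = 0 := by
        intro U hU
        have h1 := hZ (L (fun α => (U α).2)) (LinearMap.mem_range_self L _)
        have hUeq : ∀ α, ((0 : Fin n → ℝ), (U α).2) = U α := by
          intro α; exact Prod.ext (hU α).symm rfl
        simpa [L, hUeq, LinearMap.sum_apply] using h1
      have h2 := h Z hZ'
      simp only [hφ, LinearMap.sub_apply, LinearMap.sum_apply]
      rw [h2]; ring
    rw [Subspace.dualCoannihilator_dualAnnihilator_eq] at hmem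
    obtain ⟨w, hw⟩ := hmem
    refine ⟨fun α => Γ α + (0, w α), ?_, ?_⟩
    · intro α
      show (Γ α).1 + 0 = v α
      rw [add_zero, hΓsopde α]
    · intro Z
      have hwZ : (∑ α, ω α (0, w α) Z) = β Z - (∑ α, ω α (Γ α) Z) := by
        have h3 := congrArg (fun f => f Z) hw
        simpa [L, hφ, LinearMap.sum_apply] using h3
      simp only [map_add, LinearMap.add_apply, Finset.sum_add_distrib, hwZ]
      ring
  · rintro ⟨Γ', hΓ', hβ⟩ Z hZ
    have hvert : ∀ α, ((Γ α - Γ' α)).1 = 0 := by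
      intro α
      show (Γ α).1 - (Γ' α).1 = 0
      rw [hΓsopde α, hΓ' α, sub_self]
    have h4 := hZ (fun α => Γ α - Γ' α) hvert
    simp only [map_sub, LinearMap.sub_apply, Finset.sum_sub_distrib] at h4
    rw [hβ Z] at h4
    linarith
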